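/- Let K be a commutative ring, P a finite poset, and x < y in P. For every chain [x_1<⋯<x_n<x_{n+1}=y] in C_{n+1}(y) one has (∂∘b_x^y + b_x^y∘∂)[x_1<⋯<x_n<x_{n+1}=y] = [x_1<⋯<x_{n-1}=x] if x_{n-1} = x, and (∂∘b_x^y + b_x^y∘∂)[x_1<⋯<x_n<x_{n+1}=y] = 0 otherwise. -/

import Mathlib

open Finsupp

/-- A strictly increasing chain of `n + 1` elements of `P` ending at `x`;
this models the chains `[x₁ < ⋯ < x_{n+1} = x]` of length `n + 1`. -/
def PChain (P : Type*) [PartialOrder P] (n : ℕ) (x : P) : Type _ :=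
  {f : Fin (n + 1) → P // StrictMono f ∧ f (Fin.last n) = x}

/-- `CC K P n x` is the free `K`-module on chains of `n + 1` elements ending at `x`;
it models the module `C_{n+1}(x)` of the paper. -/
abbrev CC (K : Type*) [CommRing K] (P : Type*) [PartialOrder P] (n : ℕ) (x : P) :=
  PChain P n x →₀ K

namespace PChain

variable {P : Type*} [PartialOrder P]

/-- Remove the entry at position `i` of a chain (never the last position). -/
def remove {n : ℕ} {x : P} (f : PChain P (n + 1) x) (i : Fin (n + 1)) : PChain P n x :=
  ⟨f.1 ∘ (Fin.castSucc i).succAbove, f.2.1.comp (Fin.strictMono_succAbove _), by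
    have h : (Fin.castSucc i).succAbove (Fin.last n) = Fin.last (n + 1) := by
      rw [Fin.succAbove_of_le_castSucc _ _
        (Fin.castSucc_le_castSucc_iff.mpr (Fin.le_last i))]
      exact Fin.succ_last n
    show f.1 _ = x
    rw [h, f.2.2]⟩

/-- Prepend an element `a` below the first entry of a chain. -/
def prepend {n : ℕ} {x : P} (f : PChain P n x) (a : P) (h : a < f.1 0) :
    PChain P (n + 1) x := by
  refine ⟨Fin.cons a f.1, ?_, ?_⟩
  · rw [Fin.strictMono_iff_lt_succ]
    intro i
    refine Fin.cases ?_ (fun j => ?_) i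
    · simpa using h
    · rw [← Fin.succ_castSucc, Fin.cons_succ, Fin.cons_succ]
      exact f.2.1 (Fin.castSucc_lt_succ : Fin.castSucc j < j.succ)
  · exact f.2.2

/-- Drop the last entry of a chain, whose second-to-last entry is `x`. -/
def truncate {n : ℕ} {y : P} (f : PChain P (n + 1) y) {x : P}
    (h : f.1 (Fin.castSucc (Fin.last n)) = x) : PChain P n x :=
  ⟨f.1 ∘ Fin.castSucc, f.2.1.comp Fin.strictMono_castSucc, h⟩

/-- Drop the last two entries of a chain, whose third-to-last entry is `x`. -/
def truncate2 {n : ℕ} {y : P} (f : PChain P (n + 2) y) {x : P}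
    (h : f.1 ((Fin.last n).castSucc.castSucc) = x) : PChain P n x :=
  ⟨f.1 ∘ fun i => (Fin.castSucc (Fin.castSucc i)),
    f.2.1.comp (Fin.strictMono_castSucc.comp Fin.strictMono_castSucc), h⟩

end PChain

/-- The boundary map `∂ : C_{n+2}(x) → C_{n+1}(x)`. -/
noncomputable def bdry (K : Type*) [CommRing K] {P : Type*} [PartialOrder P] (n : ℕ) (x : P) :
    CC K P (n + 1) x →ₗ[K] CC K P n x :=
  Finsupp.lsum K fun f => LinearMap.toSpanSingleton K (CC K P n x)
    (∑ i : Fin (n + 1), ((-1 : K) ^ (i : ℕ)) • Finsupp.single (f.remove i) (1 : K))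

open Classical in
/-- The contracting homotopy `c`, prepending the least element `a`. -/
noncomputable def contra (K : Type*) [CommRing K] {P : Type*} [PartialOrder P] (a : P)
    (n : ℕ) (x : P) : CC K P n x →ₗ[K] CC K P (n + 1) x :=
  Finsupp.lsum K fun f => LinearMap.toSpanSingleton K (CC K P (n + 1) x)
    (if h : a < f.1 0 then Finsupp.single (f.prepend a h) (1 : K) else 0)

open Classical in
/-- The connecting map `b_x^y : C_{n+2}(y) → C_{n+1}(x)`. -/
noncomputable def bmap (K : Type*) [CommRing K] {P : Type*} [PartialOrder P] (x y : P)
    (n : ℕ) : CC K P (n + 1) y →ₗ[K] CC K P n x :=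
  Finsupp.lsum K fun f => LinearMap.toSpanSingleton K (CC K P n x)
    (if h : f.1 (Fin.castSucc (Fin.last n)) = x then
      ((-1 : K) ^ (n + 1)) • Finsupp.single (f.truncate h) (1 : K)
    else 0)

section Aux

variable {K : Type*} [CommRing K] {P : Type*} [PartialOrder P]

open Classical in
lemma bdry_single {n : ℕ} {x : P} (f : PChain P (n + 1) x) :
    bdry K n x (Finsupp.single f (1 : K)) =
      ∑ i : Fin (n + 1), ((-1 : K) ^ (i : ℕ)) • Finsupp.single (f.remove i) (1 : K) := by
  rw [bdry, Finsupp.lsum_single, LinearMap.toSpanSingleton_apply, one_smul]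

open Classical in
lemma bmap_single (x : P) {n : ℕ} {y : P} (f : PChain P (n + 1) y) :
    bmap K x y n (Finsupp.single f (1 : K)) =
      if h : f.1 (Fin.castSucc (Fin.last n)) = x then
        ((-1 : K) ^ (n + 1)) • Finsupp.single (f.truncate h) (1 : K)
      else 0 := by
  rw [bmap, Finsupp.lsum_single, LinearMap.toSpanSingleton_apply, one_smul]

lemma remove_castSucc_last {n : ℕ} {y : P} (f : PChain P (n + 2) y) (i : Fin (n + 1)) :
    (f.remove i.castSucc).1 (Fin.castSucc (Fin.last n)) = f.1 ((Fin.last (n + 1)).castSucc) := by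
  refine congrArg f.1 ?_
  rw [Fin.succAbove_of_le_castSucc _ _ (by
    rw [Fin.castSucc_le_castSucc_iff, Fin.castSucc_le_castSucc_iff]
    exact Fin.le_last i), Fin.succ_castSucc, Fin.succ_last]

lemma remove_last_last {n : ℕ} {y : P} (f : PChain P (n + 2) y) :
    (f.remove (Fin.last (n + 1))).1 (Fin.castSucc (Fin.last n)) =
      f.1 ((Fin.last n).castSucc.castSucc) := by
  refine congrArg f.1 (Fin.ext ?_)
  simp [Fin.succAbove, Fin.lt_def]

lemma truncate_remove {n : ℕ} {y x : P} (f : PChain P (n + 2) y)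
    (h : f.1 ((Fin.last (n + 1)).castSucc) = x) (i : Fin (n + 1)) :
    (f.remove i.castSucc).truncate ((remove_castSucc_last f i).trans h) =
      (f.truncate h).remove i := by
  apply Subtype.ext
  funext j
  exact congrArg f.1 Fin.castSucc_succAbove_castSucc

lemma truncate2_remove {n : ℕ} {y x : P} (f : PChain P (n + 2) y)
    (h : f.1 ((Fin.last n).castSucc.castSucc) = x) :
    (f.remove (Fin.last (n + 1))).truncate ((remove_last_last f).trans h) =
      f.truncate2 h := by
  apply Subtype.ext
  funext j
  exact congrArg f.1 (Fin.succAbove_of_castSucc_lt _ _ (by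
    rw [Fin.castSucc_lt_castSucc_iff]
    exact Fin.castSucc_lt_last j))

open Classical in
lemma bmap_single_remove_castSucc (x : P) {n : ℕ} {y : P} (f : PChain P (n + 2) y)
    (i : Fin (n + 1)) :
    bmap K x y n (Finsupp.single (f.remove i.castSucc) (1 : K)) =
      if h : f.1 ((Fin.last (n + 1)).castSucc) = x then
        ((-1 : K) ^ (n + 1)) • Finsupp.single ((f.truncate h).remove i) (1 : K)
      else 0 := by
  rw [bmap_single]
  by_cases h : f.1 ((Fin.last (n + 1)).castSucc) = x
  · rw [dif_pos ((remove_castSucc_last f i).trans h), dif_pos h, truncate_remove f h i]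
  · rw [dif_neg (fun h' => h ((remove_castSucc_last f i).symm.trans h')), dif_neg h]

open Classical in
lemma bmap_single_remove_last (x : P) {n : ℕ} {y : P} (f : PChain P (n + 2) y) :
    bmap K x y n (Finsupp.single (f.remove (Fin.last (n + 1))) (1 : K)) =
      if h : f.1 ((Fin.last n).castSucc.castSucc) = x then
        ((-1 : K) ^ (n + 1)) • Finsupp.single (f.truncate2 h) (1 : K)
      else 0 := by
  rw [bmap_single]
  by_cases h : f.1 ((Fin.last n).castSucc.castSucc) = x
  · rw [dif_pos ((remove_last_last f).trans h), dif_pos h, truncate2_remove f h]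
  · rw [dif_neg (fun h' => h ((remove_last_last f).symm.trans h')), dif_neg h]

end Aux

open Classical in
/-- For `x < y` in a finite poset `P` and a chain
`[x₁ < ⋯ < x_n < x_{n+1} = y]`, the operator `∂ ∘ b_x^y + b_x^y ∘ ∂` sends its basis vector to
`[x₁ < ⋯ < x_{n-1} = x]` if `x_{n-1} = x` and to `0` otherwise.  Here the chain `f` below has
`n + 3` entries (it models a chain in `C_{n+3}(y)`; the remaining degrees are trivial since
the target `C_{n}(x)` vanishes for `n ≤ 0`), its entry `x_{n-1}` of the paper is
`f.1 ((Fin.last n).castSucc.castSucc)`, and `PChain.truncate2` removes the last two entries. -/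
theorem statement_2 (K : Type*) [CommRing K] (P : Type*) [PartialOrder P] [Fintype P]
    (x y : P) (hxy : x < y) (n : ℕ) (f : PChain P (n + 2) y) :
    (bdry K n x ∘ₗ bmap K x y (n + 1) + bmap K x y n ∘ₗ bdry K (n + 1) y)
        (Finsupp.single f (1 : K)) =
      if h : f.1 ((Fin.last n).castSucc.castSucc) = x then
        Finsupp.single (f.truncate2 h) (1 : K)
      else 0 := by
  rw [LinearMap.add_apply, LinearMap.comp_apply, LinearMap.comp_apply,
    bdry_single, bmap_single, map_sum]
  simp only [map_smul, Fin.sum_univ_castSucc (n := n + 1),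
    bmap_single_remove_castSucc, bmap_single_remove_last,
    Fin.coe_castSucc, Fin.val_last]
  by_cases hQ : f.1 (Fin.castSucc (Fin.last (n + 1))) = x
  · rw [dif_pos hQ, map_smul, bdry_single]
    simp only [dif_pos hQ, Finset.smul_sum, smul_smul]
    rw [← add_assoc, ← Finset.sum_add_distrib]
    have hz : ∀ i : Fin (n + 1),
        ((-1 : K) ^ (n + 1 + 1) * (-1 : K) ^ (i : ℕ)) •
            Finsupp.single ((f.truncate hQ).remove i) (1 : K) +
          ((-1 : K) ^ (i : ℕ) * (-1 : K) ^ (n + 1)) •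
            Finsupp.single ((f.truncate hQ).remove i) (1 : K) = 0 := by
      intro i
      rw [← add_smul]
      have : ((-1 : K) ^ (n + 1 + 1) * (-1 : K) ^ (i : ℕ) +
          (-1 : K) ^ (i : ℕ) * (-1 : K) ^ (n + 1)) = 0 := by ring
      rw [this, zero_smul]
    rw [Finset.sum_congr rfl fun i _ => hz i, Finset.sum_const, smul_zero, zero_add]
    by_cases hR : f.1 ((Fin.last n).castSucc.castSucc) = x
    · rw [dif_pos hR, dif_pos hR, smul_smul, ← pow_add,
        Even.neg_one_pow ⟨n + 1, by ring⟩, one_smul]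
    · rw [dif_neg hR, dif_neg hR, smul_zero]
  · rw [dif_neg hQ, map_zero]
    simp only [dif_neg hQ, smul_zero, Finset.sum_const, zero_add]
    by_cases hR : f.1 ((Fin.last n).castSucc.castSucc) = x
    · rw [dif_pos hR, dif_pos hR, smul_smul, ← pow_add,
        Even.neg_one_pow ⟨n + 1, by ring⟩, one_smul]
    · rw [dif_neg hR, dif_neg hR, smul_zero]
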